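/- Let M = (A,B,C,D) be a discrete-time system and X ∈ ℂ^{n×n} Hermitian with X > 0. Then every Δ ∈ ℂ^{(n+m)×(n+m)} for which Ŵ(X,M) + E₁ΔE₂ᴴ + E₂ΔᴴE₁ᴴ is singular satisfies ‖Δ‖₂ ≥ λ_min(D_s·Ŵ(X,M)·D_s); equivalently, the X-passivity radius satisfies λ_min(D_s·Ŵ(X,M)·D_s) ≤ ρ_M(X). -/

import Mathlib

open Matrix
open scoped ComplexOrder

/-- The smallest eigenvalue of a Hermitian matrix, expressed as the infimum of the
Rayleigh quotient over unit vectors. -/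
noncomputable def lamMin {k : Type*} [Fintype k] [DecidableEq k]
    (A : Matrix k k ℂ) : ℝ :=
  ⨅ x : {x : EuclideanSpace ℂ k // ‖x‖ = 1},
    (inner ℂ ((x : EuclideanSpace ℂ k)) (Matrix.toEuclideanLin A x) : ℂ).re

/-- The spectral norm (largest singular value) of a complex matrix. -/
noncomputable def spNorm {k l : Type*} [Fintype k] [Fintype l] [DecidableEq k] [DecidableEq l]
    (A : Matrix k l ℂ) : ℝ :=
  ‖(Matrix.toEuclideanLin A).toContinuousLinearMap‖

/-- `E₁ = [[I,0],[0,0],[0,I]]`. -/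
noncomputable def Emat1 (n m : ℕ) : Matrix (Fin n ⊕ (Fin n ⊕ Fin m)) (Fin n ⊕ Fin m) ℂ :=
  fromBlocks 1 0 (fromRows 0 0) (fromRows 0 1)

/-- `E₂ = [[0,0],[I,0],[0,I]]`. -/
noncomputable def Emat2 (n m : ℕ) : Matrix (Fin n ⊕ (Fin n ⊕ Fin m)) (Fin n ⊕ Fin m) ℂ :=
  fromBlocks 0 0 (fromRows 1 0) (fromRows 0 1)

/-- `D_s = diag(Iₙ, Iₙ, (1/√2)·I_m)`. -/
noncomputable def Dscale (n m : ℕ) :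
    Matrix (Fin n ⊕ (Fin n ⊕ Fin m)) (Fin n ⊕ (Fin n ⊕ Fin m)) ℂ :=
  fromBlocks 1 0 0 (fromBlocks 1 0 0 ((((Real.sqrt 2)⁻¹ : ℝ) : ℂ) • 1))

/-- The matrix `Ŵ(X,M) = [[X⁻¹, A, B],[Aᴴ, X, Cᴴ],[Bᴴ, C, Dᴴ + D]]`. -/
noncomputable def What {n m : ℕ} (X A : Matrix (Fin n) (Fin n) ℂ)
    (B : Matrix (Fin n) (Fin m) ℂ) (C : Matrix (Fin m) (Fin n) ℂ)
    (D : Matrix (Fin m) (Fin m) ℂ) :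
    Matrix (Fin n ⊕ (Fin n ⊕ Fin m)) (Fin n ⊕ (Fin n ⊕ Fin m)) ℂ :=
  fromBlocks X⁻¹ (fromCols A B) (fromRows Aᴴ Bᴴ) (fromBlocks X Cᴴ C (Dᴴ + D))

/-- The `X`-passivity radius. -/
noncomputable def XPassivityRadius {n m : ℕ} (X A : Matrix (Fin n) (Fin n) ℂ)
    (B : Matrix (Fin n) (Fin m) ℂ) (C : Matrix (Fin m) (Fin n) ℂ)
    (D : Matrix (Fin m) (Fin m) ℂ) : ℝ :=
  sInf {r : ℝ | ∃ Δ : Matrix (Fin n ⊕ Fin m) (Fin n ⊕ Fin m) ℂ,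
    (What X A B C D + Emat1 n m * Δ * (Emat2 n m)ᴴ
      + Emat2 n m * Δᴴ * (Emat1 n m)ᴴ).det = 0 ∧ r = spNorm Δ}

/- ### Auxiliary lemmas -/

private lemma inner_eq_dot {k : Type*} [Fintype k] (x y : EuclideanSpace ℂ k) :
    (inner ℂ x y : ℂ) = star (x : k → ℂ) ⬝ᵥ (y : k → ℂ) := by
  simp [PiLp.inner_apply, dotProduct, mul_comm]

private lemma norm_sq_eq_dot {k : Type*} [Fintype k] (x : EuclideanSpace ℂ k) :
    ‖x‖ ^ 2 = (star (x : k → ℂ) ⬝ᵥ (x : k → ℂ)).re := by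
  rw [← inner_eq_dot]
  have := inner_self_eq_norm_sq (𝕜 := ℂ) x
  simpa using this.symm

private lemma enorm_sq {k : Type*} [Fintype k] (x : EuclideanSpace ℂ k) :
    ‖x‖ ^ 2 = ∑ i, Complex.normSq (x i) := by
  rw [norm_sq_eq_dot]
  simp [dotProduct, ← Complex.normSq_eq_conj_mul_self]

private lemma inner_toEuc {k : Type*} [Fintype k] [DecidableEq k] (A : Matrix k k ℂ)
    (x : EuclideanSpace ℂ k) :
    (inner ℂ x (Matrix.toEuclideanLin A x) : ℂ) = star (x : k → ℂ) ⬝ᵥ A *ᵥ (x : k → ℂ) := by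
  rw [inner_eq_dot]; rfl

private lemma dot_bound {k l : Type*} [Fintype k] [Fintype l] [DecidableEq k] [DecidableEq l]
    (Δ : Matrix k l ℂ) (u : EuclideanSpace ℂ k) (v : EuclideanSpace ℂ l) :
    ‖star (u : k → ℂ) ⬝ᵥ Δ *ᵥ (v : l → ℂ)‖ ≤ spNorm Δ * (‖u‖ * ‖v‖) := by
  have h : star (u : k → ℂ) ⬝ᵥ Δ *ᵥ (v : l → ℂ)
      = inner ℂ u ((Matrix.toEuclideanLin Δ).toContinuousLinearMap v) := by
    rw [inner_eq_dot]; rfl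
  rw [h]
  calc ‖(inner ℂ u ((Matrix.toEuclideanLin Δ).toContinuousLinearMap v) : ℂ)‖
      ≤ ‖u‖ * ‖(Matrix.toEuclideanLin Δ).toContinuousLinearMap v‖ := norm_inner_le_norm _ _
    _ ≤ ‖u‖ * (spNorm Δ * ‖v‖) := by
        gcongr; exact ((Matrix.toEuclideanLin Δ).toContinuousLinearMap).le_opNorm v
    _ = spNorm Δ * (‖u‖ * ‖v‖) := by ring

private lemma lamMin_bddBelow {k : Type*} [Fintype k] [DecidableEq k] (A : Matrix k k ℂ) :
    BddBelow (Set.range fun x : {x : EuclideanSpace ℂ k // ‖x‖ = 1} =>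
      (inner ℂ ((x : EuclideanSpace ℂ k)) (Matrix.toEuclideanLin A x) : ℂ).re) := by
  refine ⟨-spNorm A, ?_⟩
  rintro r ⟨⟨x, hx⟩, rfl⟩
  have h1 := dot_bound A x x
  rw [← inner_toEuc] at h1
  have h2 : |(inner ℂ x (Matrix.toEuclideanLin A x) : ℂ).re|
      ≤ ‖(inner ℂ x (Matrix.toEuclideanLin A x) : ℂ)‖ := Complex.abs_re_le_norm _
  simp only [hx] at h1
  dsimp only
  nlinarith [neg_abs_le ((inner ℂ x (Matrix.toEuclideanLin A x) : ℂ)).re]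

private lemma lamMin_le_rayleigh {k : Type*} [Fintype k] [DecidableEq k]
    (A : Matrix k k ℂ) (w : EuclideanSpace ℂ k) (hw : w ≠ 0) :
    lamMin A * ‖w‖ ^ 2 ≤ (star (w : k → ℂ) ⬝ᵥ A *ᵥ (w : k → ℂ)).re := by
  have hwn : (0:ℝ) < ‖w‖ := norm_pos_iff.mpr hw
  set c : ℝ := ‖w‖⁻¹ with hc
  have hcw : ‖(c : ℂ) • w‖ = 1 := by
    rw [norm_smul]
    simp [hc, abs_of_pos (inv_pos.mpr hwn), inv_mul_cancel₀ hwn.ne']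
  have hray : (inner ℂ ((c:ℂ) • w) (Matrix.toEuclideanLin A ((c:ℂ) • w)) : ℂ).re
      = c ^ 2 * (inner ℂ w (Matrix.toEuclideanLin A w) : ℂ).re := by
    rw [(Matrix.toEuclideanLin A).map_smul, inner_smul_left, inner_smul_right]
    rw [Complex.conj_ofReal, ← mul_assoc, ← Complex.ofReal_mul, Complex.re_ofReal_mul]
    ring
  have hle : lamMin A ≤ c ^ 2 * (inner ℂ w (Matrix.toEuclideanLin A w) : ℂ).re := by
    rw [← hray]
    exact ciInf_le (lamMin_bddBelow A) ⟨(c:ℂ) • w, hcw⟩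
  have h2 : lamMin A * ‖w‖ ^ 2 ≤ (inner ℂ w (Matrix.toEuclideanLin A w) : ℂ).re := by
    have := mul_le_mul_of_nonneg_right hle (le_of_lt (pow_pos hwn 2))
    calc lamMin A * ‖w‖^2 ≤ c ^ 2 * (inner ℂ w (Matrix.toEuclideanLin A w) : ℂ).re * ‖w‖^2 := this
      _ = (c * ‖w‖)^2 * (inner ℂ w (Matrix.toEuclideanLin A w) : ℂ).re := by ring
      _ = (inner ℂ w (Matrix.toEuclideanLin A w) : ℂ).re := by
          rw [hc, inv_mul_cancel₀ hwn.ne']; ring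
  rw [inner_toEuc] at h2
  exact h2

private lemma vecMul_star_eq {k l : Type*} [Fintype k] [Fintype l] (M : Matrix k l ℂ)
    (z : k → ℂ) : star z ᵥ* M = star (Mᴴ *ᵥ z) := by
  rw [star_mulVec, conjTranspose_conjTranspose]

private lemma conj_dot {k l : Type*} [Fintype k] [Fintype l] (M : Matrix k l ℂ)
    (a : k → ℂ) (b : l → ℂ) :
    star (star a ⬝ᵥ M *ᵥ b) = star b ⬝ᵥ Mᴴ *ᵥ a := by
  rw [star_dotProduct, star_star, dotProduct_mulVec, star_mulVec]

/-- Main estimate: any singular perturbation has spectral norm at least the smallest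
eigenvalue of the scaled matrix. -/
private lemma key_lemma {n m : ℕ}
    (W : Matrix (Fin n ⊕ (Fin n ⊕ Fin m)) (Fin n ⊕ (Fin n ⊕ Fin m)) ℂ)
    (Δ : Matrix (Fin n ⊕ Fin m) (Fin n ⊕ Fin m) ℂ)
    (h : (W + Emat1 n m * Δ * (Emat2 n m)ᴴ + Emat2 n m * Δᴴ * (Emat1 n m)ᴴ).det = 0) :
    lamMin (Dscale n m * W * Dscale n m) ≤ spNorm Δ := by
  obtain ⟨z, hz0, hz⟩ := Matrix.exists_mulVec_eq_zero_iff.mpr h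
  set u : EuclideanSpace ℂ (Fin n ⊕ Fin m) :=
    WithLp.toLp 2 (Sum.elim (fun i => z (Sum.inl i)) (fun j => z (Sum.inr (Sum.inr j)))) with hu
  set v : EuclideanSpace ℂ (Fin n ⊕ Fin m) :=
    WithLp.toLp 2 (Sum.elim (fun i => z (Sum.inr (Sum.inl i))) (fun j => z (Sum.inr (Sum.inr j)))) with hv
  set w : EuclideanSpace ℂ (Fin n ⊕ (Fin n ⊕ Fin m)) :=
    WithLp.toLp 2 (Sum.elim (fun i => z (Sum.inl i)) (Sum.elim (fun i => z (Sum.inr (Sum.inl i)))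
      (fun j => ((Real.sqrt 2 : ℝ) : ℂ) * z (Sum.inr (Sum.inr j))))) with hw
  have hE1 : (Emat1 n m)ᴴ *ᵥ z = (u : (Fin n ⊕ Fin m) → ℂ) := by
    funext k
    rcases k with i | j <;>
      simp [hu, Emat1, mulVec, dotProduct, Fintype.sum_sum_type, one_apply, conjTranspose_apply]
  have hE2 : (Emat2 n m)ᴴ *ᵥ z = (v : (Fin n ⊕ Fin m) → ℂ) := by
    funext k
    rcases k with i | j <;>
      simp [hv, Emat2, mulVec, dotProduct, Fintype.sum_sum_type, one_apply, conjTranspose_apply]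
  have hDs : Dscale n m *ᵥ (w : (Fin n ⊕ (Fin n ⊕ Fin m)) → ℂ) = z := by
    funext k
    rcases k with i | (i | j) <;>
      simp [hw, Dscale, mulVec, dotProduct, Fintype.sum_sum_type, one_apply, mul_comm]
  have hDsH : (Dscale n m)ᴴ = Dscale n m := by
    simp [Dscale, fromBlocks_conjTranspose, conjTranspose_smul, Complex.conj_ofReal]
  have hw0 : w ≠ 0 := by
    intro h0
    apply hz0
    have h0' : ∀ k, w k = 0 := fun k => by rw [h0]; rfl
    funext k
    have h2 : ((Real.sqrt 2 : ℝ) : ℂ) ≠ 0 := by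
      simp [Real.sqrt_eq_zero']
    rcases k with i | (i | j)
    · exact h0' (Sum.inl i)
    · exact h0' (Sum.inr (Sum.inl i))
    · have h3 : ((Real.sqrt 2 : ℝ) : ℂ) * z (Sum.inr (Sum.inr j)) = 0 := h0' (Sum.inr (Sum.inr j))
      rcases mul_eq_zero.mp h3 with h | h
      · exact absurd h h2
      · exact h
  have hq : star z ⬝ᵥ ((W + Emat1 n m * Δ * (Emat2 n m)ᴴ + Emat2 n m * Δᴴ * (Emat1 n m)ᴴ) *ᵥ z)
      = 0 := by
    rw [hz, dotProduct_zero]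
  set t : ℂ := star (u : (Fin n ⊕ Fin m) → ℂ) ⬝ᵥ Δ *ᵥ (v : (Fin n ⊕ Fin m) → ℂ) with ht
  have t2 : star z ⬝ᵥ (Emat1 n m * Δ * (Emat2 n m)ᴴ) *ᵥ z = t := by
    rw [ht, ← hE1, ← hE2, ← mulVec_mulVec, ← mulVec_mulVec,
      dotProduct_mulVec (star z) (Emat1 n m), vecMul_star_eq]
  have t3 : star z ⬝ᵥ (Emat2 n m * Δᴴ * (Emat1 n m)ᴴ) *ᵥ z = star t := by
    rw [ht, conj_dot, ← hE1, ← hE2, ← mulVec_mulVec, ← mulVec_mulVec,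
      dotProduct_mulVec (star z) (Emat2 n m), vecMul_star_eq]
  set Q : ℂ := star (w : (Fin n ⊕ (Fin n ⊕ Fin m)) → ℂ)
      ⬝ᵥ (Dscale n m * W * Dscale n m) *ᵥ (w : (Fin n ⊕ (Fin n ⊕ Fin m)) → ℂ) with hQ
  have t1 : star z ⬝ᵥ W *ᵥ z = Q := by
    rw [hQ, ← mulVec_mulVec, ← mulVec_mulVec, dotProduct_mulVec (star (w : (Fin n ⊕ (Fin n ⊕ Fin m)) → ℂ)) (Dscale n m),
      vecMul_star_eq, hDsH, hDs]
  have hsum : Q + (t + star t) = 0 := by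
    have e := hq
    rw [add_mulVec, add_mulVec, dotProduct_add, dotProduct_add, t1, t2, t3] at e
    linear_combination e
  have hQre : Q.re = -(2 * t.re) := by
    have := congrArg Complex.re hsum
    simp at this
    linarith
  have hnorm : ‖u‖ ^ 2 + ‖v‖ ^ 2 = ‖w‖ ^ 2 := by
    rw [enorm_sq, enorm_sq, enorm_sq]
    simp [hu, hv, hw, Fintype.sum_sum_type, Complex.normSq_mul, Complex.normSq_ofReal,
      Real.mul_self_sqrt (by norm_num : (2:ℝ) ≥ 0).le, two_mul, Finset.sum_add_distrib]
    ring
  have hray := lamMin_le_rayleigh (Dscale n m * W * Dscale n m) w hw0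
  rw [← hQ] at hray
  have htb : ‖t‖ ≤ spNorm Δ * (‖u‖ * ‖v‖) := by rw [ht]; exact dot_bound Δ u v
  have hsp : 0 ≤ spNorm Δ := norm_nonneg _
  have hub : Q.re ≤ spNorm Δ * ‖w‖ ^ 2 := by
    rw [hQre, ← hnorm]
    have h1 : -t.re ≤ ‖t‖ := by
      have := Complex.abs_re_le_norm t
      cases abs_le.mp this; linarith
    nlinarith [norm_nonneg u, norm_nonneg v, sq_nonneg (‖u‖ - ‖v‖)]
  have hwpos : (0:ℝ) < ‖w‖ ^ 2 := pow_pos (norm_pos_iff.mpr hw0) 2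
  have hfin : lamMin (Dscale n m * W * Dscale n m) * ‖w‖ ^ 2 ≤ spNorm Δ * ‖w‖ ^ 2 :=
    le_trans hray hub
  exact le_of_mul_le_mul_right (by linarith [hfin]) hwpos

private lemma pert_eq {n m : ℕ} (X A : Matrix (Fin n) (Fin n) ℂ) (B : Matrix (Fin n) (Fin m) ℂ)
    (C : Matrix (Fin m) (Fin n) ℂ) (D : Matrix (Fin m) (Fin m) ℂ) :
    What X A B C D + Emat1 n m * (fromBlocks (1 - A) (-B) (-C) (-D)) * (Emat2 n m)ᴴ
      + Emat2 n m * (fromBlocks (1 - A) (-B) (-C) (-D))ᴴ * (Emat1 n m)ᴴ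
    = fromBlocks X⁻¹ (fromCols 1 0) (fromRows 1 0) (fromBlocks X 0 0 0) := by
  ext i j
  rcases i with i | (i | i) <;> rcases j with j | (j | j) <;>
    simp [What, Emat1, Emat2, Matrix.mul_apply, Fintype.sum_sum_type, one_apply,
      conjTranspose_apply, Finset.sum_ite_eq, Finset.sum_ite_eq', Matrix.sub_apply] <;>
    first
      | ring1
      | exact if_congr eq_comm rfl rfl

private lemma det0 {n m : ℕ} (X A : Matrix (Fin n) (Fin n) ℂ) (B : Matrix (Fin n) (Fin m) ℂ)
    (C : Matrix (Fin m) (Fin n) ℂ) (D : Matrix (Fin m) (Fin m) ℂ)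
    (hX : X.PosDef) (hne : Nonempty (Fin n ⊕ Fin m)) :
    (What X A B C D + Emat1 n m * (fromBlocks (1 - A) (-B) (-C) (-D)) * (Emat2 n m)ᴴ
      + Emat2 n m * (fromBlocks (1 - A) (-B) (-C) (-D))ᴴ * (Emat1 n m)ᴴ).det = 0 := by
  rw [pert_eq]
  have hu : IsUnit X.det := isUnit_iff_ne_zero.mpr (by
    have := hX.det_pos
    intro h
    rw [h] at this
    exact lt_irrefl _ this)
  haveI : Invertible X⁻¹ := invertibleOfRightInverse _ X (nonsing_inv_mul X hu)
  rw [Matrix.det_fromBlocks₁₁]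
  have hzero : fromBlocks X 0 0 0
      - fromRows (1 : Matrix (Fin n) (Fin n) ℂ) (0 : Matrix (Fin m) (Fin n) ℂ) * ⅟(X⁻¹)
        * fromCols (1 : Matrix (Fin n) (Fin n) ℂ) (0 : Matrix (Fin n) (Fin m) ℂ)
      = (0 : Matrix (Fin n ⊕ Fin m) (Fin n ⊕ Fin m) ℂ) := by
    rw [invOf_eq_nonsing_inv, nonsing_inv_nonsing_inv X hu, fromRows_mul,
      fromRows_mul_fromCols]
    simp
  rw [hzero, Matrix.det_zero, mul_zero]

/-- every perturbation `Δ` making `Ŵ(X,M) + E₁ΔE₂ᴴ + E₂ΔᴴE₁ᴴ` singular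
satisfies `‖Δ‖₂ ≥ λ_min(D_s·Ŵ(X,M)·D_s)`; equivalently
`λ_min(D_s·Ŵ(X,M)·D_s) ≤ ρ_M(X)`. -/
theorem stmt8 {n m : ℕ} (A : Matrix (Fin n) (Fin n) ℂ) (B : Matrix (Fin n) (Fin m) ℂ)
    (C : Matrix (Fin m) (Fin n) ℂ) (D : Matrix (Fin m) (Fin m) ℂ)
    (X : Matrix (Fin n) (Fin n) ℂ) (hX : X.PosDef) :
    (∀ Δ : Matrix (Fin n ⊕ Fin m) (Fin n ⊕ Fin m) ℂ,
      (What X A B C D + Emat1 n m * Δ * (Emat2 n m)ᴴ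
        + Emat2 n m * Δᴴ * (Emat1 n m)ᴴ).det = 0 →
      lamMin (Dscale n m * What X A B C D * Dscale n m) ≤ spNorm Δ)
    ∧ lamMin (Dscale n m * What X A B C D * Dscale n m) ≤ XPassivityRadius X A B C D := by
  constructor
  · intro Δ h
    exact key_lemma (What X A B C D) Δ h
  · by_cases hK : Nonempty (Fin n ⊕ Fin m)
    · apply le_csInf
      · exact ⟨spNorm (fromBlocks (1 - A) (-B) (-C) (-D)),
          fromBlocks (1 - A) (-B) (-C) (-D), det0 X A B C D hX hK, rfl⟩
      · rintro r ⟨Δ, hdet, rfl⟩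
        exact key_lemma (What X A B C D) Δ hdet
    · -- empty case : n = m = 0
      have hEK : IsEmpty (Fin n ⊕ Fin m) := not_nonempty_iff.mp hK
      have hEn : IsEmpty (Fin n) := ⟨fun i => hEK.false (Sum.inl i)⟩
      have hEm : IsEmpty (Fin m) := ⟨fun j => hEK.false (Sum.inr j)⟩
      haveI := hEn; haveI := hEm
      haveI hEN : IsEmpty (Fin n ⊕ (Fin n ⊕ Fin m)) := by infer_instance
      have hlam : lamMin (Dscale n m * What X A B C D * Dscale n m) = 0 := by
        haveI : IsEmpty {x : EuclideanSpace ℂ (Fin n ⊕ (Fin n ⊕ Fin m)) // ‖x‖ = 1} := by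
          constructor
          rintro ⟨x, hx⟩
          have hx0 : x = 0 := PiLp.ext fun i => (hEN.false i).elim
          rw [hx0] at hx
          simp at hx
        exact Real.iInf_of_isEmpty _
      have hset : {r : ℝ | ∃ Δ : Matrix (Fin n ⊕ Fin m) (Fin n ⊕ Fin m) ℂ,
          (What X A B C D + Emat1 n m * Δ * (Emat2 n m)ᴴ
            + Emat2 n m * Δᴴ * (Emat1 n m)ᴴ).det = 0 ∧ r = spNorm Δ} = ∅ := by
        ext r
        simp only [Set.mem_setOf_eq, Set.mem_empty_iff_false, iff_false]
        rintro ⟨Δ, hdet, rfl⟩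
        rw [Matrix.det_isEmpty] at hdet
        exact one_ne_zero hdet
      rw [hlam, XPassivityRadius, hset, Real.sInf_empty]
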